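/- Let ℱ be the class of two-layer ReLU networks Σᵢ aᵢ ReLU(wᵢᵀx + bᵢ) on the unit sphere S^{d−1}. Let P, Q be probability distributions supported on S^{d−1}. If there exists ε > 0 such that Q({x ∈ S^{d−1} : dist(x, supp(P)) ≥ ε}) > 0, then for every M > 0 there exists f ∈ ℱ with E_P[f(x)²] = 0 and E_Q[f(x)²] ≥ M. -/

import Mathlib

open MeasureTheory

/-- A function is a two-layer ReLU network if it is a finite linear combination of
neurons `x ↦ ReLU(wᵀx + b)`. -/
def IsTwoLayerReLU {d : ℕ} (f : EuclideanSpace ℝ (Fin d) → ℝ) : Prop :=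
  ∃ (m : ℕ) (a : Fin m → ℝ) (w : Fin m → EuclideanSpace ℝ (Fin d)) (b : Fin m → ℝ),
    ∀ x, f x = ∑ i, a i * max ((inner ℝ (w i) x : ℝ) + b i) 0

/-- The (closed) support of a measure on a metric space: the set of points all of whose
neighborhoods have positive measure. -/
def measSupport {X : Type*} [MeasurableSpace X] [PseudoMetricSpace X] (μ : Measure X) :
    Set X := {x | ∀ r : ℝ, 0 < r → 0 < μ (Metric.ball x r)}

/-- If `P, Q` are probability measures supported on the unit sphere and `Q` puts positive mass
on unit vectors at distance at least `ε > 0` from the support of `P`, then for every `M > 0`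
there is a two-layer ReLU network `f` with `E_P[f²] = 0` and `E_Q[f²] ≥ M`. -/
lemma measSupport_compl_null' {X : Type*} [MetricSpace X] [SecondCountableTopology X]
    [MeasurableSpace X] [OpensMeasurableSpace X] (μ : Measure X) :
    μ (measSupport μ)ᶜ = 0 := by
  obtain ⟨T, hTc, hTsub, hTU⟩ := TopologicalSpace.isOpen_sUnion_countable
    {u : Set X | IsOpen u ∧ μ u = 0} (fun u hu => hu.1)
  refine measure_mono_null (fun x hx => ?_) ((measure_sUnion_null_iff hTc).2 fun s hs => (hTsub hs).2)
  · simp only [measSupport, Set.mem_compl_iff, Set.mem_setOf_eq, not_forall] at hx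
    obtain ⟨r, hr, hball⟩ := hx
    have h0 : μ (Metric.ball x r) = 0 := by simpa [pos_iff_ne_zero] using hball
    rw [hTU]
    exact ⟨Metric.ball x r, ⟨Metric.isOpen_ball, h0⟩, Metric.mem_ball_self hr⟩

lemma exists_density_point' {X : Type*} [MetricSpace X] [SecondCountableTopology X]
    [MeasurableSpace X] [OpensMeasurableSpace X] (μ : Measure X) {A : Set X}
    (hA : IsClosed A) (hpos : 0 < μ A) :
    ∃ y ∈ A, ∀ r : ℝ, 0 < r → 0 < μ (Metric.ball y r ∩ A) := by
  set ν := μ.restrict A with hν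
  have h0 : ν (measSupport ν)ᶜ = 0 := measSupport_compl_null' ν
  have hνu : 0 < ν Set.univ := by rw [hν, Measure.restrict_apply_univ]; exact hpos
  have hne : (measSupport ν).Nonempty := by
    by_contra h
    rw [Set.not_nonempty_iff_eq_empty] at h
    rw [h, Set.compl_empty] at h0
    exact absurd (h0 ▸ hνu) (lt_irrefl 0)
  obtain ⟨y, hy⟩ := hne
  have hball : ∀ r : ℝ, 0 < r → 0 < μ (Metric.ball y r ∩ A) := fun r hr => by
    have := hy r hr
    rwa [hν, Measure.restrict_apply measurableSet_ball] at this
  refine ⟨y, ?_, hball⟩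
  by_contra hyA
  obtain ⟨r, hr, hsub⟩ := Metric.isOpen_iff.1 hA.isOpen_compl y hyA
  have : Metric.ball y r ∩ A = ∅ := by
    ext z; simp only [Set.mem_inter_iff, Set.mem_empty_iff_false, iff_false, not_and]
    exact fun hz => hsub hz
  exact absurd (this ▸ hball r hr) (by simp)

set_option maxHeartbeats 1000000 in
theorem two_layer_relu_no_extrapolation (d : ℕ)
    (P Q : Measure (EuclideanSpace ℝ (Fin d)))
    [IsProbabilityMeasure P] [IsProbabilityMeasure Q]
    (hsuppP : P {x | ‖x‖ ≠ 1} = 0) (hsuppQ : Q {x | ‖x‖ ≠ 1} = 0)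
    (hsep : ∃ ε : ℝ, 0 < ε ∧
      0 < Q {x | ‖x‖ = 1 ∧ ε ≤ Metric.infDist x (measSupport P)}) :
    ∀ M : ℝ, 0 < M → ∃ f : EuclideanSpace ℝ (Fin d) → ℝ, IsTwoLayerReLU f ∧
      ∫ x, (f x) ^ 2 ∂P = 0 ∧ M ≤ ∫ x, (f x) ^ 2 ∂Q := by
  intro M hM
  obtain ⟨ε, hε, hQA⟩ := hsep
  set S : Set (EuclideanSpace ℝ (Fin d)) := measSupport P with hS
  set A : Set (EuclideanSpace ℝ (Fin d)) :=
    {x | ‖x‖ = 1 ∧ ε ≤ Metric.infDist x S} with hA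
  have hAclosed : IsClosed A := by
    have h1 : IsClosed {x : EuclideanSpace ℝ (Fin d) | ‖x‖ = 1} :=
      isClosed_eq continuous_norm continuous_const
    have h2 : IsClosed {x : EuclideanSpace ℝ (Fin d) | ε ≤ Metric.infDist x S} :=
      isClosed_le continuous_const (Metric.continuous_infDist_pt S)
    exact h1.inter h2
  obtain ⟨y, hyA, hy⟩ := exists_density_point' Q hAclosed hQA
  have hy1 : ‖y‖ = 1 := hyA.1
  have hyS : ε ≤ Metric.infDist y S := hyA.2
  set δ : ℝ := ε ^ 2 / 8 with hδdef
  have hδ : 0 < δ := by positivity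
  set B : Set (EuclideanSpace ℝ (Fin d)) := Metric.ball y (Real.sqrt δ) ∩ A with hB
  have hBmeas : MeasurableSet B := measurableSet_ball.inter hAclosed.measurableSet
  have hQB : 0 < Q B := hy _ (Real.sqrt_pos.2 hδ)
  set q : ℝ := (Q B).toReal with hq
  have hq0 : 0 < q := ENNReal.toReal_pos hQB.ne' (measure_ne_top Q B)
  set c : ℝ := 2 * Real.sqrt (M / q) / δ with hc
  have hc0 : 0 < c := by positivity
  set f : EuclideanSpace ℝ (Fin d) → ℝ := fun x =>
    c * max ((inner ℝ y x : ℝ) + (δ - 1)) 0 + (-c) * max ((inner ℝ y x : ℝ) + (-1)) 0 with hf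
  refine ⟨f, ?_, ?_, ?_⟩
  · refine ⟨2, ![c, -c], ![y, y], ![δ - 1, -1], fun x => ?_⟩
    simp [hf, Fin.sum_univ_two]
  · -- E_P[f²] = 0
    have haez : ∀ᵐ x ∂P, f x ^ 2 = 0 := by
      rw [ae_iff]
      refine measure_mono_null (fun x hx => ?_)
        (measure_union_null hsuppP (measSupport_compl_null' P))
      simp only [Set.mem_setOf_eq] at hx
      have hfx : f x ≠ 0 := fun h => hx (by rw [h]; ring)
      by_cases hx1 : ‖x‖ = 1
      · right
        -- f x ≠ 0  ⟹  inner ℝ y x > 1 - δ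
        have hip : (1 : ℝ) - δ < inner ℝ y x := by
          by_contra hip
          push_neg at hip
          apply hfx
          have e1 : max ((inner ℝ y x : ℝ) + (δ - 1)) 0 = 0 :=
            max_eq_right (by linarith)
          have e2 : max ((inner ℝ y x : ℝ) + (-1)) 0 = 0 :=
            max_eq_right (by linarith)
          rw [hf]; simp only [e1, e2]; ring
        have hnsq : ‖x - y‖ ^ 2 < 2 * δ := by
          have h1 := norm_sub_sq_real x y
          rw [hx1, hy1] at h1
          have h2 := real_inner_comm x y
          nlinarith
        have hdist : dist x y < ε / 2 := by
          rw [dist_eq_norm]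
          nlinarith [norm_nonneg (x - y), hε]
        have hxS : ε / 2 < Metric.infDist x S := by
          have h := Metric.infDist_le_infDist_add_dist (x := y) (y := x) (s := S)
          rw [dist_comm] at h
          linarith
        intro hxmem
        rw [Metric.infDist_zero_of_mem hxmem] at hxS
        linarith
      · left; exact hx1
    calc ∫ x, f x ^ 2 ∂P = ∫ _, (0 : ℝ) ∂P := integral_congr_ae haez
      _ = 0 := integral_zero _ _
  · -- M ≤ E_Q[f²]
    have hcont : Continuous f := by
      apply Continuous.add
      · exact continuous_const.mul ((continuous_const.inner continuous_id).add
          continuous_const |>.max continuous_const)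
      · exact continuous_const.mul ((continuous_const.inner continuous_id).add
          continuous_const |>.max continuous_const)
    have hbound : ∀ x, 0 ≤ f x ∧ f x ≤ c * δ := by
      intro x
      rcases le_total ((inner ℝ y x : ℝ) + (δ - 1)) 0 with h1 | h1 <;>
        rcases le_total ((inner ℝ y x : ℝ) + (-1)) 0 with h2 | h2 <;>
        rw [hf] <;>
        simp only [max_eq_right, max_eq_left, h1, h2] <;>
        constructor <;> nlinarith [le_max_right ((inner ℝ y x : ℝ) + (δ - 1)) 0,
          le_max_left ((inner ℝ y x : ℝ) + (δ - 1)) 0,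
          le_max_right ((inner ℝ y x : ℝ) + (-1)) 0,
          le_max_left ((inner ℝ y x : ℝ) + (-1)) 0, hc0.le, hδ.le]
    have hint : Integrable (fun x => f x ^ 2) Q := by
      refine (integrable_const ((c * δ) ^ 2)).mono'
        ((hcont.pow 2).aestronglyMeasurable) (ae_of_all _ fun x => ?_)
      have := hbound x
      rw [Real.norm_eq_abs, abs_pow, abs_of_nonneg this.1]
      nlinarith [this.1, this.2, hc0.le, hδ.le]
    have hlow : ∀ x ∈ B, c * δ / 2 ≤ f x := by
      intro x hxB
      have hx1 : ‖x‖ = 1 := hxB.2.1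
      have hd : dist x y < Real.sqrt δ := hxB.1
      have hdsq : dist x y ^ 2 < δ := by
        have := (Real.lt_sqrt dist_nonneg).1 hd
        linarith
      have hipu : (inner ℝ y x : ℝ) ≤ 1 := by
        have := real_inner_le_norm y x
        rw [hx1, hy1] at this; linarith
      have hipl : 1 - δ / 2 ≤ (inner ℝ y x : ℝ) := by
        have h1 := norm_sub_sq_real x y
        rw [hx1, hy1] at h1
        have h2 := real_inner_comm x y
        rw [dist_eq_norm] at hdsq
        nlinarith [sq_nonneg (‖x - y‖)]
      have e2 : max ((inner ℝ y x : ℝ) + (-1)) 0 = 0 := max_eq_right (by linarith)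
      have e1 : max ((inner ℝ y x : ℝ) + (δ - 1)) 0 = (inner ℝ y x : ℝ) + (δ - 1) :=
        max_eq_left (by linarith)
      rw [hf]; simp only [e1, e2]
      nlinarith [hc0.le]
    have hkey : ∫ x, B.indicator (fun _ => (c * δ / 2) ^ 2) x ∂Q ≤ ∫ x, f x ^ 2 ∂Q := by
      refine integral_mono ((integrable_const _).indicator hBmeas) hint fun x => ?_
      by_cases hxB : x ∈ B
      · rw [Set.indicator_of_mem hxB]
        exact pow_le_pow_left₀ (by positivity) (hlow x hxB) 2
      · rw [Set.indicator_of_notMem hxB]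
        positivity
    have hind : ∫ x, B.indicator (fun _ => (c * δ / 2) ^ 2) x ∂Q = q * (c * δ / 2) ^ 2 := by
      rw [integral_indicator_const _ hBmeas]
      simp [hq, smul_eq_mul, measureReal_def]
    have hval : c * δ / 2 = Real.sqrt (M / q) := by
      rw [hc]; field_simp
    have heq : q * (c * δ / 2) ^ 2 = M := by
      rw [hval, Real.sq_sqrt (by positivity)]
      field_simp
    linarith [hkey, hind ▸ hkey, heq ▸ (hind ▸ hkey)]
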